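/- (Proposition 7.2: mixed second partial of the Gram discriminant at the origin.) Fix n ∈ ℕ, a real g₀ > 2π with θ(g₀) = π·n, and integers k₁, k₂ ≥ 1. Define F(t; ε₁, ε₂) := cos(θ(t)) + (ε₁/√(k₁+1))·cos(θ(t) − log(k₁+1)·t) + (ε₂/√(k₂+1))·cos(θ(t) − log(k₂+1)·t). Let g : ℝ² → ℝ be continuously differentiable on a neighborhood U of (0,0) with g(0,0) = g₀, and assume that for every (ε₁,ε₂) ∈ U the t-derivative of F(·; ε₁, ε₂) vanishes at t = g(ε₁,ε₂). Define Δ(ε₁,ε₂) := F(g(ε₁,ε₂); ε₁, ε₂) and, for ε₂ near 0, D₁(ε₂) := the derivative at 0 of the map ε₁ ↦ Δ(ε₁, ε₂). Then D₁ is differentiable at 0 with D₁'(0) = ((−1)^n / (log(g₀/(2π)))²) · [sin(log(k₁+1)·g₀)·log(g₀/(2π(k₁+1)²))/√(k₁+1)] · [sin(log(k₂+1)·g₀)·log(g₀/(2π(k₂+1)²))/√(k₂+1)]. -/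

import Mathlib

/-- The Riemann–Siegel theta function (approximate form):
`θ(t) = (t/2)·log(t/(2π)) − t/2 − π/8`. -/
noncomputable def rsTheta (t : ℝ) : ℝ :=
  t / 2 * Real.log (t / (2 * Real.pi)) - t / 2 - Real.pi / 8

/-- The two-parameter perturbation of the core,
`F(t; ε₁, ε₂) = cos(θ(t)) + (ε₁/√(k₁+1))·cos(θ(t) − log(k₁+1)·t)
              + (ε₂/√(k₂+1))·cos(θ(t) − log(k₂+1)·t)`. -/
noncomputable def pertF (k₁ k₂ : ℕ) (t ε₁ ε₂ : ℝ) : ℝ :=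
  Real.cos (rsTheta t) +
    ε₁ / Real.sqrt ((k₁ : ℝ) + 1) *
      Real.cos (rsTheta t - Real.log ((k₁ : ℝ) + 1) * t) +
    ε₂ / Real.sqrt ((k₂ : ℝ) + 1) *
      Real.cos (rsTheta t - Real.log ((k₂ : ℝ) + 1) * t)

noncomputable def pertFt (k₁ k₂ : ℕ) (t ε₁ ε₂ : ℝ) : ℝ :=
  -(Real.sin (rsTheta t) * (Real.log (t / (2 * Real.pi)) / 2)) -
    ε₁ / Real.sqrt ((k₁ : ℝ) + 1) *
      (Real.sin (rsTheta t - Real.log ((k₁ : ℝ) + 1) * t) *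
        (Real.log (t / (2 * Real.pi)) / 2 - Real.log ((k₁ : ℝ) + 1))) -
    ε₂ / Real.sqrt ((k₂ : ℝ) + 1) *
      (Real.sin (rsTheta t - Real.log ((k₂ : ℝ) + 1) * t) *
        (Real.log (t / (2 * Real.pi)) / 2 - Real.log ((k₂ : ℝ) + 1)))

lemma hasDerivAt_logdiv {t : ℝ} (ht : 0 < t) :
    HasDerivAt (fun s : ℝ => Real.log (s / (2 * Real.pi))) (1 / t) t := by
  have h2π : (0:ℝ) < 2 * Real.pi := by positivity
  have h1 : HasDerivAt (fun s : ℝ => s / (2 * Real.pi)) (1 / (2 * Real.pi)) t := by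
    simpa using (hasDerivAt_id t).div_const (2 * Real.pi)
  have h := (Real.hasDerivAt_log (x := t / (2 * Real.pi)) (by positivity)).comp t h1
  refine HasDerivAt.congr_deriv h ?_
  field_simp

lemma hasDerivAt_logdiv2 {t : ℝ} (ht : 0 < t) :
    HasDerivAt (fun s : ℝ => Real.log (s / (2 * Real.pi)) / 2) (1 / (2 * t)) t := by
  have h := (hasDerivAt_logdiv ht).div_const 2
  refine HasDerivAt.congr_deriv h ?_
  field_simp

lemma hasDerivAt_rsTheta {t : ℝ} (ht : 0 < t) :
    HasDerivAt rsTheta (Real.log (t / (2 * Real.pi)) / 2) t := by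
  have h := ((((hasDerivAt_id t).div_const 2).mul (hasDerivAt_logdiv ht)).sub
      ((hasDerivAt_id t).div_const 2)).sub_const (Real.pi / 8)
  refine HasDerivAt.congr_deriv h ?_
  simp only [id_eq]
  field_simp
  ring

lemma hasDerivAt_pertF (k₁ k₂ : ℕ) (ε₁ ε₂ : ℝ) {t : ℝ} (ht : 0 < t) :
    HasDerivAt (fun s => pertF k₁ k₂ s ε₁ ε₂) (pertFt k₁ k₂ t ε₁ ε₂) t := by
  have hθ := hasDerivAt_rsTheta ht
  have h1 := hθ.cos
  have h2 := ((hθ.sub ((hasDerivAt_id t).const_mul (Real.log ((k₁:ℝ)+1)))).cos).const_mul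
    (ε₁ / Real.sqrt ((k₁:ℝ)+1))
  have h3 := ((hθ.sub ((hasDerivAt_id t).const_mul (Real.log ((k₂:ℝ)+1)))).cos).const_mul
    (ε₂ / Real.sqrt ((k₂:ℝ)+1))
  have h := (h1.add h2).add h3
  refine HasDerivAt.congr_deriv h ?_
  unfold pertFt
  simp only [id_eq, Pi.sub_apply]
  ring


/-- Proposition 7.2: mixed second partial of the Gram discriminant at the origin.
If `g : ℝ² → ℝ` is `C¹` near `(0,0)` with `g(0,0) = g₀` (a Gram point, `θ(g₀) = π·n`,
`g₀ > 2π`), and `g(ε₁,ε₂)` is always a critical point of `F(·; ε₁, ε₂)`, then with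
`Δ(ε₁,ε₂) = F(g(ε₁,ε₂); ε₁, ε₂)` and `D₁(ε₂) = (d/dε₁)|₀ Δ(ε₁,ε₂)`, the function
`D₁` is differentiable at `0` with the stated product value. -/
theorem discriminant_mixed_second_partial (n : ℕ) (g₀ : ℝ)
    (hg₀ : 2 * Real.pi < g₀) (hGram : rsTheta g₀ = Real.pi * n)
    (k₁ k₂ : ℕ) (hk₁ : 1 ≤ k₁) (hk₂ : 1 ≤ k₂)
    (g : ℝ × ℝ → ℝ) (U : Set (ℝ × ℝ)) (hU : U ∈ nhds ((0 : ℝ), (0 : ℝ)))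
    (hgC1 : ContDiffOn ℝ 1 g U) (hg00 : g (0, 0) = g₀)
    (hcrit : ∀ p ∈ U, deriv (fun t => pertF k₁ k₂ t p.1 p.2) (g p) = 0) :
    HasDerivAt
      (fun ε₂ : ℝ =>
        deriv (fun ε₁ : ℝ => pertF k₁ k₂ (g (ε₁, ε₂)) ε₁ ε₂) 0)
      (((-1 : ℝ) ^ n / (Real.log (g₀ / (2 * Real.pi))) ^ 2) *
        (Real.sin (Real.log ((k₁ : ℝ) + 1) * g₀) *
          Real.log (g₀ / (2 * Real.pi * ((k₁ : ℝ) + 1) ^ 2)) /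
            Real.sqrt ((k₁ : ℝ) + 1)) *
        (Real.sin (Real.log ((k₂ : ℝ) + 1) * g₀) *
          Real.log (g₀ / (2 * Real.pi * ((k₂ : ℝ) + 1) ^ 2)) /
            Real.sqrt ((k₂ : ℝ) + 1))) 0 := by
  have hπ : (0:ℝ) < Real.pi := Real.pi_pos
  have h2π : (0:ℝ) < 2 * Real.pi := by positivity
  have hg₀pos : 0 < g₀ := h2π.trans hg₀
  have hs₁ : 0 < Real.sqrt ((k₁:ℝ)+1) := Real.sqrt_pos.mpr (by positivity)
  have hs₂ : 0 < Real.sqrt ((k₂:ℝ)+1) := Real.sqrt_pos.mpr (by positivity)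
  have hL : 0 < Real.log (g₀ / (2 * Real.pi)) :=
    Real.log_pos (by rw [lt_div_iff₀ h2π]; linarith)
  obtain ⟨V, hVU, hVopen, hV0⟩ := mem_nhds_iff.mp hU
  have hgdiff : ∀ p ∈ V, DifferentiableAt ℝ g p := fun p hp =>
    ((hgC1.mono hVU).differentiableOn one_ne_zero).differentiableAt (hVopen.mem_nhds hp)
  set u : ℝ → ℝ := fun y => g (0, y) with hudef
  set a : ℝ := fderiv ℝ g (0,0) (0,1) with hadef
  have hu0 : HasDerivAt u a 0 :=
    ((hgdiff _ hV0).hasFDerivAt).comp_hasDerivAt 0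
      ((hasDerivAt_const 0 (0:ℝ)).prodMk (hasDerivAt_id 0))
  have hu00 : u 0 = g₀ := hg00
  have hu0pos : 0 < u 0 := by rw [hu00]; exact hg₀pos
  have hVev : ∀ᶠ y in nhds (0:ℝ), (0, y) ∈ V := by
    have hc : ContinuousAt (fun y : ℝ => ((0:ℝ), y)) 0 :=
      (continuous_const.prodMk continuous_id).continuousAt
    exact hc (hVopen.mem_nhds hV0)
  have hupos : ∀ᶠ y in nhds (0:ℝ), 0 < u y :=
    hu0.continuousAt.eventually (by rw [hu00]; exact eventually_gt_nhds hg₀pos)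
  -- the critical point equation, in explicit form
  have hφev : ∀ᶠ y in nhds (0:ℝ), pertFt k₁ k₂ (u y) 0 y = 0 := by
    filter_upwards [hVev, hupos] with y hVy huy
    have h : deriv (fun t => pertF k₁ k₂ t 0 y) (u y) = 0 := hcrit (0, y) (hVU hVy)
    rwa [(hasDerivAt_pertF k₁ k₂ 0 y huy).deriv] at h
  -- Step A : identify the inner derivative
  have hA : ∀ᶠ y in nhds (0:ℝ),
      deriv (fun ε₁ : ℝ => pertF k₁ k₂ (g (ε₁, y)) ε₁ y) 0
        = Real.cos (rsTheta (u y) - Real.log ((k₁:ℝ)+1) * u y) / Real.sqrt ((k₁:ℝ)+1) := by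
    filter_upwards [hVev, hupos, hφev] with y hVy huy hφy
    have hv : HasDerivAt (fun e : ℝ => g (e, y)) (fderiv ℝ g (0,y) (1,0)) 0 :=
      ((hgdiff _ hVy).hasFDerivAt).comp_hasDerivAt 0
        ((hasDerivAt_id (0:ℝ)).prodMk (hasDerivAt_const (0:ℝ) y))
    set b : ℝ := fderiv ℝ g (0,y) (1,0) with hbdef
    have hθ : HasDerivAt (fun e : ℝ => rsTheta (g (e, y)))
        (Real.log (u y / (2 * Real.pi)) / 2 * b) 0 :=
      by have := (hasDerivAt_rsTheta huy).comp 0 hv; exact this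
    have h1 := hθ.cos
    have h2 := ((hasDerivAt_id (0:ℝ)).div_const (Real.sqrt ((k₁:ℝ)+1))).mul
      ((hθ.sub (hv.const_mul (Real.log ((k₁:ℝ)+1)))).cos)
    have h3 := ((hθ.sub (hv.const_mul (Real.log ((k₂:ℝ)+1)))).cos).const_mul
      (y / Real.sqrt ((k₂:ℝ)+1))
    have hΔ : HasDerivAt (fun ε₁ : ℝ => pertF k₁ k₂ (g (ε₁, y)) ε₁ y)
        (pertFt k₁ k₂ (u y) 0 y * b
          + Real.cos (rsTheta (u y) - Real.log ((k₁:ℝ)+1) * u y) / Real.sqrt ((k₁:ℝ)+1)) 0 := by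
      refine HasDerivAt.congr_deriv ((h1.add h2).add h3) ?_
      unfold pertFt
      simp only [id_eq, Pi.sub_apply]
      ring
    rw [hΔ.deriv, hφy, zero_mul, zero_add]
  -- Step B : implicit derivative of u from the critical point equation
  have hθu : HasDerivAt (fun y => rsTheta (u y)) (Real.log (u 0 / (2 * Real.pi)) / 2 * a) 0 :=
    (hasDerivAt_rsTheta hu0pos).comp 0 hu0
  have hθ'u : HasDerivAt (fun y => Real.log (u y / (2 * Real.pi)) / 2) (1 / (2 * u 0) * a) 0 :=
    (hasDerivAt_logdiv2 hu0pos).comp 0 hu0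
  have P1 := (hθu.sin).mul hθ'u
  have Q1 := ((hθu.sub (hu0.const_mul (Real.log ((k₁:ℝ)+1)))).sin).mul
    (hθ'u.sub_const (Real.log ((k₁:ℝ)+1)))
  have Q2 := ((hθu.sub (hu0.const_mul (Real.log ((k₂:ℝ)+1)))).sin).mul
    (hθ'u.sub_const (Real.log ((k₂:ℝ)+1)))
  have P2 := Q1.const_mul ((0:ℝ) / Real.sqrt ((k₁:ℝ)+1))
  have P3 := ((hasDerivAt_id (0:ℝ)).div_const (Real.sqrt ((k₂:ℝ)+1))).mul Q2
  have hφ := (P1.neg.sub P2).sub P3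
  have hφfun : (fun y => pertFt k₁ k₂ (u y) 0 y) =ᶠ[nhds (0:ℝ)] (fun _ => (0:ℝ)) := hφev
  have hφ0 := hφ.congr_of_eventuallyEq (f₁ := fun _ : ℝ => (0:ℝ)) hφfun.symm
  have hceq := hφ0.unique (hasDerivAt_const 0 0)
  -- Step C : conclude
  have hcosD := ((hθu.sub (hu0.const_mul (Real.log ((k₁:ℝ)+1)))).cos).div_const
    (Real.sqrt ((k₁:ℝ)+1))
  have hfinal := hcosD.congr_of_eventuallyEq hA
  refine HasDerivAt.congr_deriv hfinal ?_
  simp only [Pi.sub_apply, Pi.mul_apply] at hceq ⊢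
  rw [hu00] at hceq ⊢
  rw [hGram] at hceq ⊢
  rw [mul_comm Real.pi (n:ℝ)] at hceq ⊢
  have hcosnpi : Real.cos ((n:ℝ) * Real.pi) = (-1)^n := by
    simpa using Real.cos_nat_mul_pi_sub 0 n
  simp only [Real.sin_sub, Real.cos_sub, Real.sin_nat_mul_pi, hcosnpi, zero_mul,
    mul_zero, zero_div, zero_add, add_zero, zero_sub, sub_zero, id_eq, neg_zero, neg_neg] at hceq ⊢
  have hM₁ : Real.log (g₀ / (2 * Real.pi * ((k₁:ℝ)+1)^2))
      = Real.log (g₀/(2*Real.pi)) - 2*Real.log ((k₁:ℝ)+1) := by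
    rw [Real.log_div (ne_of_gt hg₀pos) (by positivity),
      Real.log_div (ne_of_gt hg₀pos) (by positivity),
      Real.log_mul (by positivity) (by positivity), Real.log_pow]
    push_cast; ring
  have hM₂ : Real.log (g₀ / (2 * Real.pi * ((k₂:ℝ)+1)^2))
      = Real.log (g₀/(2*Real.pi)) - 2*Real.log ((k₂:ℝ)+1) := by
    rw [Real.log_div (ne_of_gt hg₀pos) (by positivity),
      Real.log_div (ne_of_gt hg₀pos) (by positivity),
      Real.log_mul (by positivity) (by positivity), Real.log_pow]
    push_cast; ring
  rw [hM₁, hM₂]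
  have hX : ((-1:ℝ)^n) * (-(Real.log (g₀/(2*Real.pi))/2 * a) * (Real.log (g₀/(2*Real.pi))/2)
      + Real.sin (Real.log ((k₂:ℝ)+1) * g₀) * (Real.log (g₀/(2*Real.pi))/2 - Real.log ((k₂:ℝ)+1))
        / Real.sqrt ((k₂:ℝ)+1)) = 0 := by
    linear_combination hceq
  have hX0 := (mul_eq_zero.mp hX).resolve_left (pow_ne_zero n (by norm_num : (-1:ℝ) ≠ 0))
  have hGne : Real.log (g₀/(2*Real.pi)) ≠ 0 := ne_of_gt hL
  have hs₁ne : Real.sqrt ((k₁:ℝ)+1) ≠ 0 := ne_of_gt hs₁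
  have hs₂ne : Real.sqrt ((k₂:ℝ)+1) ≠ 0 := ne_of_gt hs₂
  field_simp at hX0 ⊢
  linear_combination (-(Real.sin (g₀ * Real.log ((k₁:ℝ)+1)) *
    (Real.log (g₀/(2*Real.pi)) - 2*Real.log ((k₁:ℝ)+1)))) * hX0
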